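/- arXiv:2503.07422 — 2 statements merged into one kernel-verified Lean document; each statement's English description precedes it below -/
import Mathlib

section
/- Let $K/k$ be a finite extension of global function fields of degree $n$, with places $\infty_1,\dots,\infty_m$ of $K$ above $\infty$ of local degrees $n_i = [K_{\infty_i}:k_\infty]$, and let $\mathcal{O}$ be an $A$-order in $K$ with unit group $\mathcal{O}^\times$ and constant subfield $\mathbb{F}_\mathcal{O}$. Define $\ln: K^\times \to \mathbb{R}^m$ by $\ln(\alpha) = (\ln|\alpha|_1,\dots,\ln|\alpha|_m)$ and let $d: \mathbb{R} \to \mathbb{R}^m$ be the diagonal. Then the quotient $\mathfrak{T}(\mathcal{O}) = \mathbb{R}^m/(\ln(\mathcal{O}^\times) + d(\mathbb{R}))$ is compact and its volume with respect to the quotient Lebesgue measure is $\mathrm{vol}(\mathfrak{T}(\mathcal{O})) = \frac{n}{n_1\cdots n_m}\cdot\mathcal{R}(\mathcal{O})$, where $\mathcal{R}(\mathcal{O})$ is the regulator: $\mathcal{R}(\mathcal{O}) = 1$ if $m = 1$, and $\mathcal{R}(\mathcal{O}) = |\det(n_j\ln|u_i|_j)_{1\le i,j\le m-1}|$ for generators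 $u_1,\dots,u_{m-1}$ of $\mathcal{O}^\times/\mathbb{F}_\mathcal{O}^\times$ if $m > 1$. -/
open MeasureTheory

/-- Compactness and volume of `𝔗(𝒪) = ℝ^m/(ln(𝒪^×) + d(ℝ))` (here
`m = m' + 1`): with `v j = ln(u_j) = (ln|u_j|_1, …, ln|u_j|_m)` the logarithm vectors of
generators of `𝒪^×/𝔽_𝒪^×` (linearly independent, lying in the hyperplane
`∑ n_i t_i = 0` by the product formula), the quotient of `ℝ^m` by the subgroup `G`
generated by the `v j` and the diagonal is compact, and — identifying `ℝ^m/d(ℝ)` with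
`ℝ^{m-1}` via `t ↦ (t_{i+1} − t_1)_i`, under which the quotient Lebesgue measure is the
Lebesgue measure — a fundamental domain for the resulting lattice `Γ` has volume
`vol(𝔗(𝒪)) = (n/(n_1⋯n_m))·𝓡(𝒪)`, where `n = ∑ n_i` and
`𝓡(𝒪) = |det(n_j ln|u_i|_j)_{1≤i,j≤m-1}|` is the regulator. -/
theorem statement17 (m' : ℕ) (nn : Fin (m' + 1) → ℕ) (hn : ∀ i, 0 < nn i)
    (v : Fin m' → (Fin (m' + 1) → ℝ))
    (hv : LinearIndependent ℝ v)
    (hhyp : ∀ j, ∑ i, (nn i : ℝ) * v j i = 0)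
    (G : AddSubgroup (Fin (m' + 1) → ℝ))
    (hG : G = AddSubgroup.closure
      (Set.range v ∪ Set.range (fun s : ℝ => (fun _ => s : Fin (m' + 1) → ℝ))))
    (Γ : AddSubgroup (Fin m' → ℝ))
    (hΓ : Γ = AddSubgroup.closure
      (Set.range (fun j => (fun i : Fin m' => v j i.succ - v j 0))))
    (Reg : ℝ)
    (hReg : Reg = |(Matrix.of (fun i j : Fin m' => (nn j.castSucc : ℝ) * v i j.castSucc)).det|) :
    CompactSpace ((Fin (m' + 1) → ℝ) ⧸ G) ∧
    ∃ s : Set (Fin m' → ℝ), IsAddFundamentalDomain Γ s volume ∧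
      volume s = ENNReal.ofReal
        (((∑ i, nn i : ℕ) : ℝ) / ((∏ i, nn i : ℕ) : ℝ) * Reg) := by
  classical
  subst hG hΓ hReg
  set w : Fin m' → (Fin m' → ℝ) := fun j => (fun i : Fin m' => v j i.succ - v j 0) with hw_def
  set B : Fin (m' + 1) → (Fin (m' + 1) → ℝ) := Fin.cons (fun _ => 1) v with hB_def
  set M : Matrix (Fin (m' + 1)) (Fin (m' + 1)) ℝ := Matrix.of B with hM_def
  set E : Matrix (Fin (m' + 1)) (Fin (m' + 1)) ℝ :=
    Matrix.of fun k i => if k = i then (1 : ℝ) else if k = 0 then -1 else 0 with hE_def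
  have hdetE : E.det = 1 := by
    rw [Matrix.det_of_upperTriangular]
    · simp [hE_def]
    · intro i j hji
      have h1 : i ≠ j := ne_of_gt hji
      have h2 : i ≠ 0 := by
        intro h; subst h; exact absurd hji (by simp [Fin.zero_le j])
      simp [hE_def, h1, h2]
  set F : Matrix (Fin (m' + 1)) (Fin (m' + 1)) ℝ :=
    Matrix.of fun k i => if i = Fin.last m' then (nn k : ℝ) / (nn (Fin.last m') : ℝ)
      else if k = i then 1 else 0 with hF_def
  have hdetF : F.det = 1 := by
    rw [Matrix.det_of_upperTriangular]
    · rw [Finset.prod_eq_one]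
      intro i _
      have hnl : ((nn (Fin.last m') : ℝ)) ≠ 0 := Nat.cast_ne_zero.mpr (hn _).ne'
      by_cases h : i = Fin.last m'
      · simp only [hF_def, Matrix.of_apply, if_pos h, h]
        exact div_self hnl
      · simp [hF_def, h]
    · intro i j hji
      have h1 : i ≠ j := ne_of_gt hji
      have h2 : j ≠ Fin.last m' := by
        intro h; subst h; exact absurd hji (by simp [Fin.le_last i])
      simp [hF_def, h1, h2]
  -- products
  have hME : ∀ a b, (M * E) a b = if b = 0 then M a 0 else M a b - M a 0 := by
    intro a b
    rw [Matrix.mul_apply]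
    by_cases hb : b = 0
    · subst hb
      rw [if_pos rfl, Finset.sum_eq_single 0]
      · simp [hE_def]
      · intro k _ hk; simp [hE_def, hk]
      · simp
    · rw [if_neg hb]
      have : ∀ k, M a k * E k b
          = (if k = b then M a k else 0) - (if k = 0 then M a k else 0) := by
        intro k
        by_cases h1 : k = b
        · subst h1; simp [hE_def, hb]
        · by_cases h2 : k = 0
          · subst h2; simp [hE_def, h1, Ne.symm hb]
          · simp [hE_def, h1, h2]
      rw [Finset.sum_congr rfl fun k _ => this k, Finset.sum_sub_distrib]
      simp [Finset.sum_ite_eq']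
  have hMF : ∀ a b, (M * F) a b
      = if b = Fin.last m' then (∑ k, M a k * (nn k : ℝ)) / (nn (Fin.last m') : ℝ)
        else M a b := by
    intro a b
    rw [Matrix.mul_apply]
    by_cases hb : b = Fin.last m'
    · subst hb
      rw [if_pos rfl, Finset.sum_div]
      refine Finset.sum_congr rfl fun k _ => ?_
      simp [hF_def, mul_div_assoc]
    · rw [if_neg hb]
      rw [Finset.sum_eq_single b]
      · simp [hF_def, hb]
      · intro k _ hk; simp [hF_def, hb, hk, Ne.symm hk]
      · simp
  set V' : Matrix (Fin m') (Fin m') ℝ := Matrix.of fun i j : Fin m' => v i j.castSucc with hV_def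
  -- det (M * E) = det W
  have hrow0 : ∀ j : Fin (m' + 1), (M * E) 0 j = if j = 0 then 1 else 0 := by
    intro j; rw [hME]
    by_cases h : j = 0
    · simp [h, hM_def, hB_def]
    · simp [h, hM_def, hB_def]
  have hsub1 : (M * E).submatrix Fin.succ Fin.succ = Matrix.of w := by
    ext a b
    simp only [Matrix.submatrix_apply]
    rw [hME]
    simp [Fin.succ_ne_zero, hM_def, hB_def, hw_def]
  have hdet1 : (M * E).det = (Matrix.of w).det := by
    rw [Matrix.det_succ_row_zero, Fin.sum_univ_succ]
    simp [hrow0, Fin.succ_ne_zero, hsub1]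
  -- det (M * F) = (-1)^m' * (S/nlast) * det V'
  have hcolL : ∀ i : Fin (m' + 1), (M * F) i (Fin.last m')
      = if i = 0 then (∑ k, (nn k : ℝ)) / (nn (Fin.last m') : ℝ) else 0 := by
    intro i
    rw [hMF, if_pos rfl]
    induction i using Fin.cases with
    | zero => simp [hM_def, hB_def]
    | succ a =>
      have : ∑ k, M a.succ k * (nn k : ℝ) = 0 := by
        rw [← hhyp a]
        exact Finset.sum_congr rfl fun k _ => by simp [hM_def, hB_def, mul_comm]
      simp [this, Fin.succ_ne_zero]
  have hsub2 : (M * F).submatrix Fin.succ Fin.castSucc = V' := by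
    ext a b
    simp only [Matrix.submatrix_apply]
    rw [hMF, if_neg (Fin.castSucc_lt_last b).ne]
    simp [hM_def, hB_def, hV_def]
  have hdet2 : (M * F).det = (-1) ^ m' * ((∑ k, (nn k : ℝ)) / (nn (Fin.last m') : ℝ)) * V'.det := by
    rw [Matrix.det_succ_column _ (Fin.last m'), Fin.sum_univ_succ]
    simp only [hcolL, Fin.succ_ne_zero, if_neg, if_pos rfl, mul_zero, zero_mul, mul_one,
      Finset.sum_const_zero, add_zero, Fin.val_zero, zero_add, Fin.val_last, Fin.succAbove_zero,
      Fin.succAbove_last, hsub2]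
    simp only [if_true, if_false, zero_mul, mul_zero, Finset.sum_const_zero, add_zero]
  have hMW : M.det = (Matrix.of w).det := by
    rw [← hdet1, Matrix.det_mul, hdetE, mul_one]
  have hMV : M.det = (-1) ^ m' * ((∑ k, (nn k : ℝ)) / (nn (Fin.last m') : ℝ)) * V'.det := by
    rw [← hdet2, Matrix.det_mul, hdetF, mul_one]
  -- linear independence of B
  have hSpos : (0 : ℝ) < ∑ k, (nn k : ℝ) :=
    Finset.sum_pos (fun k _ => by exact_mod_cast hn k) ⟨0, Finset.mem_univ 0⟩
  set L : (Fin (m' + 1) → ℝ) →ₗ[ℝ] ℝ := ∑ k, (nn k : ℝ) • LinearMap.proj k with hL_def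
  have hLapp : ∀ x : Fin (m' + 1) → ℝ, L x = ∑ k, (nn k : ℝ) * x k := by
    intro x
    simp [hL_def, LinearMap.sum_apply, LinearMap.smul_apply, smul_eq_mul]
  have hB : LinearIndependent ℝ B := by
    rw [Fintype.linearIndependent_iff]
    intro c hc
    have h0 : c 0 = 0 := by
      have hB0 : L (B 0) = ∑ k, (nn k : ℝ) := by
        rw [hLapp]; simp [hB_def]
      have hBs : ∀ j : Fin m', L (B j.succ) = 0 := by
        intro j; rw [hLapp]
        simpa [hB_def] using hhyp j
      have hL0 := congrArg L hc
      rw [map_sum, map_zero, Fin.sum_univ_succ] at hL0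
      simp only [LinearMap.map_smul, smul_eq_mul, hB0, hBs, mul_zero,
        Finset.sum_const_zero, add_zero] at hL0
      exact (mul_eq_zero.mp hL0).resolve_right hSpos.ne'
    have hrest : ∀ j : Fin m', c j.succ = 0 := by
      rw [Fin.sum_univ_succ, h0, zero_smul, zero_add] at hc
      have := Fintype.linearIndependent_iff.mp hv (fun j => c j.succ) (by
        simpa [hB_def] using hc)
      exact this
    intro i
    induction i using Fin.cases with
    | zero => exact h0
    | succ a => exact hrest a
  have hMunit : IsUnit M := by
    rw [← Matrix.linearIndependent_rows_iff_isUnit]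
    exact hB
  have hdetM : M.det ≠ 0 := ((Matrix.isUnit_iff_isUnit_det M).mp hMunit).ne_zero
  have hwli : LinearIndependent ℝ w := by
    rw [show w = (Matrix.of w).row from rfl]
    rw [Matrix.linearIndependent_rows_iff_isUnit, Matrix.isUnit_iff_isUnit_det,
      isUnit_iff_ne_zero]
    rw [← hMW]
    exact hdetM
  -- compactness
  have hBbasis := hB.span_eq_top_of_card_eq_finrank' (by simp)
  set bB : Module.Basis (Fin (m' + 1)) ℝ (Fin (m' + 1) → ℝ) := Module.Basis.mk hB hBbasis.ge with hbB_def
  constructor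
  · -- CompactSpace
    set K : Set (Fin (m' + 1) → ℝ) :=
      (fun c : Fin m' → ℝ => ∑ j, c j • v j) '' (Set.Icc 0 1) with hK_def
    have hKc : IsCompact K := by
      refine IsCompact.image isCompact_Icc ?_
      exact continuous_finset_sum _ fun j _ => (continuous_apply j).smul continuous_const
    have hcover : (Set.univ : Set ((Fin (m' + 1) → ℝ) ⧸ AddSubgroup.closure
        (Set.range v ∪ Set.range (fun s : ℝ => (fun _ => s : Fin (m' + 1) → ℝ)))))
        = QuotientAddGroup.mk '' K := by
      refine Set.eq_univ_of_forall ?_ |>.symm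
      intro q
      obtain ⟨x, rfl⟩ := QuotientAddGroup.mk_surjective q
      set a : Fin (m' + 1) → ℝ := fun i => bB.repr x i with ha_def
      have hxa : ∑ i, a i • B i = x := by
        have := bB.sum_repr x
        simpa [ha_def, hbB_def, Module.Basis.coe_mk] using this
      set k : Fin (m' + 1) → ℝ := ∑ j, Int.fract (a j.succ) • v j with hk_def
      have hkK : k ∈ K := by
        refine ⟨fun j => Int.fract (a j.succ), ?_, rfl⟩
        constructor
        · intro j; exact Int.fract_nonneg _
        · intro j; exact (Int.fract_lt_one _).le
      have hdiff : x - k ∈ AddSubgroup.closure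
          (Set.range v ∪ Set.range (fun s : ℝ => (fun _ => s : Fin (m' + 1) → ℝ))) := by
        have hxk : x - k = a 0 • B 0 + ∑ j, (⌊a j.succ⌋ : ℝ) • v j := by
          rw [← hxa, hk_def, Fin.sum_univ_succ]
          rw [add_sub_assoc, ← Finset.sum_sub_distrib]
          congr 1
          refine Finset.sum_congr rfl fun j _ => ?_
          rw [hB_def, Fin.cons_succ, ← sub_smul]
          congr 1
          rw [Int.self_sub_fract]
        rw [hxk]
        refine AddSubgroup.add_mem _ ?_ ?_
        · have : a 0 • B 0 = (fun _ => a 0 : Fin (m' + 1) → ℝ) := by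
            funext i; simp [hB_def]
          rw [this]
          exact AddSubgroup.subset_closure (Set.mem_union_right _ ⟨a 0, rfl⟩)
        · refine AddSubgroup.sum_mem _ fun j _ => ?_
          rw [Int.cast_smul_eq_zsmul]
          have hvj : v j ∈ AddSubgroup.closure
              (Set.range v ∪ Set.range (fun s : ℝ => (fun _ => s : Fin (m' + 1) → ℝ))) :=
            AddSubgroup.subset_closure (Set.mem_union_left _ ⟨j, rfl⟩)
          exact AddSubgroup.zsmul_mem _ hvj _
      refine ⟨k, hkK, ?_⟩
      rw [QuotientAddGroup.eq]
      simpa [neg_add_eq_sub] using hdiff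
    exact ⟨by rw [hcover]; exact hKc.image continuous_quotient_mk'⟩
  · -- volume
    have hcard : Fintype.card (Fin m') = Module.finrank ℝ (Fin m' → ℝ) := by simp
    set bw : Module.Basis (Fin m') ℝ (Fin m' → ℝ) :=
      Module.Basis.mk hwli (hwli.span_eq_top_of_card_eq_finrank' hcard).ge with hbw_def
    refine ⟨ZSpan.fundamentalDomain bw, ?_, ?_⟩
    · have := ZSpan.isAddFundamentalDomain' bw (volume : Measure (Fin m' → ℝ))
      have hgrp : (Submodule.span ℤ (Set.range ⇑bw)).toAddSubgroup
          = AddSubgroup.closure (Set.range w) := by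
        rw [Submodule.span_int_eq_addSubgroupClosure, hbw_def, Module.Basis.coe_mk]
      rwa [hgrp] at this
    · rw [ZSpan.volume_fundamentalDomain, hbw_def, Module.Basis.coe_mk]
      congr 1
      -- real arithmetic
      have hRegdet : (Matrix.of (fun i j : Fin m' => (nn j.castSucc : ℝ) * v i j.castSucc)).det
          = (∏ j : Fin m', (nn j.castSucc : ℝ)) * V'.det := by
        exact Matrix.det_mul_row (fun j => (nn j.castSucc : ℝ)) V'
      have hnl : (0 : ℝ) < (nn (Fin.last m') : ℝ) := by exact_mod_cast hn _
      have hprodpos : (0 : ℝ) < ∏ j : Fin m', (nn j.castSucc : ℝ) :=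
        Finset.prod_pos fun j _ => by exact_mod_cast hn _
      have habsW : |(Matrix.of w).det|
          = (∑ k, (nn k : ℝ)) / (nn (Fin.last m') : ℝ) * |V'.det| := by
        rw [← hMW, hMV, abs_mul, abs_mul, abs_pow, abs_neg, abs_one, one_pow, one_mul,
          abs_div, abs_of_nonneg hSpos.le, abs_of_nonneg hnl.le]
      rw [habsW, hRegdet, abs_mul, abs_of_nonneg hprodpos.le]
      have hsum : ((∑ i, nn i : ℕ) : ℝ) = ∑ k, (nn k : ℝ) := by push_cast; ring
      have hprod : ((∏ i, nn i : ℕ) : ℝ)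
          = (∏ j : Fin m', (nn j.castSucc : ℝ)) * (nn (Fin.last m') : ℝ) := by
        push_cast
        rw [Fin.prod_univ_castSucc]
      rw [hsum, hprod]
      field_simp
end

section
/- Let $\mathcal{O}_K$ be the integral closure of $A$ in a finite extension $K/k$, $\mathfrak{C}$ a nonzero proper ideal of $\mathcal{O}_K$, and $\mathfrak{I}$ an integral ideal coprime to $\mathfrak{C}$. Let $\mathcal{O}_{K,\mathfrak{C}}^{(1)} = \{u \in \mathcal{O}_K^\times \mid u \equiv 1 \bmod \mathfrak{C}\}$. Then the map $\alpha \mapsto \alpha\mathfrak{I}$ induces a bijection from $(1 + \mathfrak{C}\mathfrak{I}^{-1})/\mathcal{O}_{K,\mathfrak{C}}^{(1)}$ onto the set of nonzero integral ideals $\mathfrak{J}$ of $\mathcal{O}_K$ with $[\mathfrak{J}] = [\mathfrak{I}]$ in the ray class group $\mathrm{Cl}(\mathcal{O}_K,\mathfrak{C})$. -/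
open FractionalIdeal IsDedekindDomain
open scoped Classical

/-- `α ≡ 1 (mod* 𝔠)`: for every prime `v` dividing `𝔠`, `ord_v(α − 1) ≥ ord_v(𝔠)`. -/
noncomputable def RayCong {R : Type*} (K : Type*) [CommRing R] [IsDedekindDomain R] [Field K]
    [Algebra R K] [IsFractionRing R K] (C : Ideal R) (α : K) : Prop :=
  ∀ v : HeightOneSpectrum R, v.asIdeal ∣ C →
    v.valuation K (α - 1) ≤
      ((Multiplicative.ofAdd
        (-(((Associates.mk v.asIdeal).count (Associates.mk C).factors : ℤ))) :
          Multiplicative ℤ) : WithZero (Multiplicative ℤ))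

section Helpers

open IsDedekindDomain.HeightOneSpectrum

set_option linter.unusedSectionVars false

variable {R K : Type*} [CommRing R] [IsDedekindDomain R] [Field K] [Algebra R K] [IsFractionRing R K]

/-- local multiplicity of `v` in `X` -/
noncomputable def cnt (v : HeightOneSpectrum R) (X : Ideal R) : ℕ :=
  (Associates.mk v.asIdeal).count (Associates.mk X).factors

lemma pow_cnt_dvd (v : HeightOneSpectrum R) {X : Ideal R} (hX : X ≠ 0) :
    v.asIdeal ^ cnt v X ∣ X := by
  rw [← Associates.mk_dvd_mk, Associates.mk_pow, congr_fun₂ Associates.dvd_eq_le]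
  exact (Associates.prime_pow_dvd_iff_le (Associates.mk_ne_zero.mpr hX)
    v.associates_irreducible).mpr le_rfl

lemma cnt_le_of_pow_dvd (v : HeightOneSpectrum R) {X : Ideal R} (hX : X ≠ 0) {n : ℕ}
    (h : v.asIdeal ^ n ∣ X) : n ≤ cnt v X := by
  rw [← Associates.mk_dvd_mk, Associates.mk_pow, congr_fun₂ Associates.dvd_eq_le] at h
  exact (Associates.prime_pow_dvd_iff_le (Associates.mk_ne_zero.mpr hX)
    v.associates_irreducible).mp h

lemma cnt_eq_zero_of_not_dvd (v : HeightOneSpectrum R) {X : Ideal R} (hX : X ≠ 0)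
    (h : ¬ v.asIdeal ∣ X) : cnt v X = 0 := by
  by_contra hc
  exact h ((Associates.count_ne_zero_iff_dvd hX v.irreducible).mp hc)

lemma cnt_mul (v : HeightOneSpectrum R) {X Y : Ideal R} (hX : X ≠ 0) (hY : Y ≠ 0) :
    cnt v (X * Y) = cnt v X + cnt v Y := by
  unfold cnt
  rw [← Associates.mk_mul_mk, Associates.count_mul (Associates.mk_ne_zero.mpr hX)
    (Associates.mk_ne_zero.mpr hY) v.associates_irreducible]

lemma dvd_of_cnt_le {X Y : Ideal R} (hX : X ≠ 0) (hY : Y ≠ 0)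
    (h : ∀ v : HeightOneSpectrum R, cnt v X ≤ cnt v Y) : X ∣ Y := by
  rw [UniqueFactorizationMonoid.dvd_iff_normalizedFactors_le_normalizedFactors hX hY,
    Multiset.le_iff_count]
  intro p
  by_cases hp : p ∈ UniqueFactorizationMonoid.normalizedFactors X
  · have hirr : Irreducible p := UniqueFactorizationMonoid.irreducible_of_normalized_factor p hp
    have hprime : Prime p := UniqueFactorizationMonoid.irreducible_iff_prime.mp hirr
    have hbot : p ≠ ⊥ := hprime.ne_zero
    have hip : p.IsPrime := Ideal.isPrime_of_prime hprime
    have := h ⟨p, hip, hbot⟩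
    unfold cnt at this
    rwa [count_associates_factors_eq hX hip hbot, count_associates_factors_eq hY hip hbot]
      at this
  · simp [Multiset.count_eq_zero_of_notMem hp]

lemma intVal_eq (v : HeightOneSpectrum R) {r : R} (hr : r ≠ 0) :
    v.intValuation r =
      ((Multiplicative.ofAdd (-(cnt v (Ideal.span {r}) : ℤ)) : Multiplicative ℤ) :
        WithZero (Multiplicative ℤ)) := by
  rw [intValuation_apply, v.intValuationDef_if_neg hr]; rfl

variable (K) in
lemma memF_iff {C I : Ideal R} (hI0 : I ≠ ⊥) {lam : K} :
    lam ∈ ((C : FractionalIdeal (nonZeroDivisors R) K) *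
      ((I : FractionalIdeal (nonZeroDivisors R) K))⁻¹) ↔
    spanSingleton (nonZeroDivisors R) lam * (I : FractionalIdeal (nonZeroDivisors R) K)
      ≤ (C : FractionalIdeal (nonZeroDivisors R) K) := by
  have hInz : (I : FractionalIdeal (nonZeroDivisors R) K) ≠ 0 := by
    simpa using hI0
  rw [← spanSingleton_le_iff_mem]
  constructor
  · intro h
    calc spanSingleton (nonZeroDivisors R) lam * (I : FractionalIdeal (nonZeroDivisors R) K)
        ≤ (C : FractionalIdeal (nonZeroDivisors R) K) * (I : FractionalIdeal (nonZeroDivisors R) K)⁻¹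
            * (I : FractionalIdeal (nonZeroDivisors R) K) := mul_le_mul_left h _
      _ = (C : FractionalIdeal (nonZeroDivisors R) K) := by
          rw [mul_assoc, inv_mul_cancel₀ hInz, mul_one]
  · intro h
    have h2 := mul_le_mul_left h ((I : FractionalIdeal (nonZeroDivisors R) K))⁻¹
    rwa [mul_assoc, mul_inv_cancel₀ hInz, mul_one] at h2

lemma val_of_memF {C I : Ideal R} (hC0 : C ≠ ⊥) (hI0 : I ≠ ⊥) (hcop : I ⊔ C = ⊤)
    (v : HeightOneSpectrum R) (hv : v.asIdeal ∣ C) {lam : K}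
    (hlam : lam ∈ ((C : FractionalIdeal (nonZeroDivisors R) K) *
      ((I : FractionalIdeal (nonZeroDivisors R) K))⁻¹)) :
    (v.valuation K) lam ≤
      ((Multiplicative.ofAdd (-(cnt v C : ℤ)) : Multiplicative ℤ) : WithZero (Multiplicative ℤ)) := by
  rw [memF_iff K hI0] at hlam
  -- pick x ∈ I, x ∉ v
  have hIv : ¬ I ≤ v.asIdeal := by
    intro hle
    have : (⊤ : Ideal R) ≤ v.asIdeal := hcop ▸ sup_le hle (Ideal.le_of_dvd hv)
    exact v.isPrime.ne_top (top_le_iff.mp this)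
  obtain ⟨x, hxI, hxv⟩ := SetLike.not_le_iff_exists.mp hIv
  have hx0 : x ≠ 0 := by rintro rfl; exact hxv (Submodule.zero_mem _)
  -- lam * x ∈ C
  have hmem : lam * algebraMap R K x ∈ (C : FractionalIdeal (nonZeroDivisors R) K) :=
    hlam (mul_mem_mul (mem_spanSingleton_self _ lam)
      ((mem_coeIdeal _).mpr ⟨x, hxI, rfl⟩))
  obtain ⟨r, hrC, hr⟩ := (mem_coeIdeal _).mp hmem
  have hvx : v.intValuation x = 1 := by
    rcases lt_or_eq_of_le (v.intValuation_le_one x) with hlt | heq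
    · exact absurd (Ideal.dvd_span_singleton.mp
        ((v.intValuation_lt_one_iff_dvd x).mp hlt)) hxv
    · exact heq
  have hval : (v.valuation K) lam = v.intValuation r := by
    have := congrArg (v.valuation K) hr
    rw [valuation_of_algebraMap, Valuation.map_mul, valuation_of_algebraMap, hvx, mul_one] at this
    exact this.symm
  rw [hval]
  have hdvd : v.asIdeal ^ cnt v C ∣ Ideal.span {r} :=
    dvd_trans (pow_cnt_dvd v hC0) (Ideal.dvd_span_singleton.mpr hrC)
  rw [intValuation_apply]
  exact (v.intValuation_le_pow_iff_dvd r (cnt v C)).mpr hdvd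

lemma val_le_of_integral {I J : Ideal R} (hI0 : I ≠ ⊥)
    (v : HeightOneSpectrum R) {β : K}
    (hJ : (J : FractionalIdeal (nonZeroDivisors R) K)
      = spanSingleton (nonZeroDivisors R) β * (I : FractionalIdeal (nonZeroDivisors R) K)) :
    (v.valuation K) β ≤
      ((Multiplicative.ofAdd ((cnt v I : ℤ)) : Multiplicative ℤ) : WithZero (Multiplicative ℤ)) := by
  set n := cnt v I with hn
  have hnotle : ¬ I ≤ v.asIdeal ^ (n + 1) := by
    intro hle
    have := cnt_le_of_pow_dvd v hI0 (Ideal.dvd_iff_le.mpr hle)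
    omega
  obtain ⟨y, hyI, hyv⟩ := SetLike.not_le_iff_exists.mp hnotle
  have hy0 : y ≠ 0 := by rintro rfl; exact hyv (Submodule.zero_mem _)
  have hmem : β * algebraMap R K y ∈ (J : FractionalIdeal (nonZeroDivisors R) K) := by
    rw [hJ]
    exact mul_mem_mul (mem_spanSingleton_self _ β) ((mem_coeIdeal _).mpr ⟨y, hyI, rfl⟩)
  obtain ⟨j, _, hj⟩ := (mem_coeIdeal _).mp hmem
  have h1 : (v.valuation K) β * v.intValuation y = v.intValuation j := by
    have := congrArg (v.valuation K) hj
    rw [valuation_of_algebraMap, Valuation.map_mul, valuation_of_algebraMap] at this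
    exact this.symm
  set m := cnt v (Ideal.span {y}) with hm
  have hmn : m ≤ n := by
    by_contra hc
    apply hyv
    have : v.intValuation y ≤ (Multiplicative.ofAdd (-((n+1 : ℕ) : ℤ)) : Multiplicative ℤ) := by
      rw [intVal_eq v hy0]
      rw [WithZero.coe_le_coe, Multiplicative.ofAdd_le]
      omega
    rw [intValuation_apply] at this
    exact Ideal.dvd_span_singleton.mp ((v.intValuation_le_pow_iff_dvd y (n+1)).mp this)
  rw [intVal_eq v hy0, ← hm] at h1
  have hval : (v.valuation K) β =
      v.intValuation j * ((Multiplicative.ofAdd ((m : ℤ)) : Multiplicative ℤ) :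
        WithZero (Multiplicative ℤ)) := by
    have hcnz : ((Multiplicative.ofAdd (-(m : ℤ)) : Multiplicative ℤ) :
        WithZero (Multiplicative ℤ)) ≠ 0 := WithZero.coe_ne_zero
    rw [eq_comm, ← h1, mul_assoc, ← WithZero.coe_mul]
    norm_num
  rw [hval]
  calc v.intValuation j * ((Multiplicative.ofAdd ((m : ℤ)) : Multiplicative ℤ) :
        WithZero (Multiplicative ℤ))
      ≤ 1 * ((Multiplicative.ofAdd ((m : ℤ)) : Multiplicative ℤ) : WithZero (Multiplicative ℤ)) :=
        mul_le_mul_left (v.intValuation_le_one j) _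
    _ = ((Multiplicative.ofAdd ((m : ℤ)) : Multiplicative ℤ) : WithZero (Multiplicative ℤ)) :=
        one_mul _
    _ ≤ ((Multiplicative.ofAdd ((n : ℤ)) : Multiplicative ℤ) : WithZero (Multiplicative ℤ)) := by
        rw [WithZero.coe_le_coe, Multiplicative.ofAdd_le]; omega

lemma not_dvd_of_cop {C I : Ideal R} (hcop : I ⊔ C = ⊤) (v : HeightOneSpectrum R)
    (hv : v.asIdeal ∣ C) : ¬ v.asIdeal ∣ I := by
  intro hd
  have : (⊤ : Ideal R) ≤ v.asIdeal := hcop ▸ sup_le (Ideal.le_of_dvd hd) (Ideal.le_of_dvd hv)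
  exact v.isPrime.ne_top (top_le_iff.mp this)

lemma mem_of_val {C I J : Ideal R} (hC0 : C ≠ ⊥) (hI0 : I ≠ ⊥) (hcop : I ⊔ C = ⊤)
    {β : K}
    (hJ : (J : FractionalIdeal (nonZeroDivisors R) K)
      = spanSingleton (nonZeroDivisors R) β * (I : FractionalIdeal (nonZeroDivisors R) K))
    (hray : RayCong K C β) :
    β - 1 ∈ ((C : FractionalIdeal (nonZeroDivisors R) K) *
      ((I : FractionalIdeal (nonZeroDivisors R) K))⁻¹) := by
  by_cases hβ1 : β = 1
  · rw [hβ1, sub_self]; exact zero_mem _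
  set lam := β - 1 with hlamdef
  have hlam0 : lam ≠ 0 := sub_ne_zero.mpr hβ1
  obtain ⟨a, b, hbmem, hab⟩ := IsFractionRing.div_surjective (A := R) lam
  have hb0 : b ≠ 0 := nonZeroDivisors.ne_zero hbmem
  have hbK : (algebraMap R K) b ≠ 0 :=
    (map_ne_zero_iff _ (IsFractionRing.injective R K)).mpr hb0
  have ha0 : a ≠ 0 := by
    intro h; apply hlam0; rw [← hab, h, _root_.map_zero, zero_div]
  have habm : lam * algebraMap R K b = algebraMap R K a := by
    rw [← hab, div_mul_cancel₀ _ hbK]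
  have hspb : Ideal.span {b} ≠ (⊥ : Ideal R) := by
    rwa [Ne, Ideal.span_singleton_eq_bot]
  have hspa : Ideal.span {a} ≠ (⊥ : Ideal R) := by
    rwa [Ne, Ideal.span_singleton_eq_bot]
  -- the key local bound
  have key : ∀ v : HeightOneSpectrum R,
      cnt v (Ideal.span {b} * C) ≤ cnt v (Ideal.span {a} * I) := by
    intro v
    have hv : (v.valuation K) lam ≤
        ((Multiplicative.ofAdd ((cnt v I : ℤ) - (cnt v C : ℤ)) : Multiplicative ℤ) :
          WithZero (Multiplicative ℤ)) := by
      by_cases hvC : v.asIdeal ∣ C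
      · have hIc : cnt v I = 0 := cnt_eq_zero_of_not_dvd v hI0 (not_dvd_of_cop hcop v hvC)
        have hb := hray v hvC
        rw [hIc]
        simpa [cnt, ← hlamdef] using hb
      · have hCc : cnt v C = 0 := cnt_eq_zero_of_not_dvd v hC0 hvC
        rw [hCc]
        have h1 : (v.valuation K) β ≤
            ((Multiplicative.ofAdd ((cnt v I : ℤ)) : Multiplicative ℤ) :
              WithZero (Multiplicative ℤ)) := val_le_of_integral hI0 v hJ
        have h2 : (v.valuation K) (1 : K) ≤
            ((Multiplicative.ofAdd ((cnt v I : ℤ)) : Multiplicative ℤ) :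
              WithZero (Multiplicative ℤ)) := by
          rw [Valuation.map_one, ← WithZero.coe_one, WithZero.coe_le_coe, ← ofAdd_zero,
            Multiplicative.ofAdd_le]
          positivity
        simpa using Valuation.map_sub_le (v.valuation K) h1 h2
    -- translate to counts
    have hb' : (v.valuation K) lam * v.intValuation b = v.intValuation a := by
      have := congrArg (v.valuation K) habm
      rwa [Valuation.map_mul, valuation_of_algebraMap, valuation_of_algebraMap] at this
    have hmul := mul_le_mul_left hv (v.intValuation b)
    rw [hb', intVal_eq v hb0, intVal_eq v ha0, ← WithZero.coe_mul,
      WithZero.coe_le_coe, ← ofAdd_add, Multiplicative.ofAdd_le] at hmul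
    rw [cnt_mul v hspb hC0, cnt_mul v hspa hI0]
    omega
  have hdvd : Ideal.span {b} * C ∣ Ideal.span {a} * I :=
    dvd_of_cnt_le (mul_ne_zero hspb hC0) (mul_ne_zero hspa hI0) key
  have hle : ((Ideal.span {a} * I : Ideal R) : FractionalIdeal (nonZeroDivisors R) K)
      ≤ ((Ideal.span {b} * C : Ideal R) : FractionalIdeal (nonZeroDivisors R) K) :=
    (coeIdeal_le_coeIdeal K).mpr (Ideal.le_of_dvd hdvd)
  rw [coeIdeal_mul, coeIdeal_mul, coeIdeal_span_singleton, coeIdeal_span_singleton] at hle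
  -- conclude
  rw [memF_iff K hI0]
  have hsb : spanSingleton (nonZeroDivisors R) ((algebraMap R K) b) ≠ 0 := by
    rw [Ne, spanSingleton_eq_zero_iff]; exact hbK
  have hcalc : spanSingleton (nonZeroDivisors R) lam
        * (I : FractionalIdeal (nonZeroDivisors R) K)
        * spanSingleton (nonZeroDivisors R) ((algebraMap R K) b)
      = spanSingleton (nonZeroDivisors R) ((algebraMap R K) a)
        * (I : FractionalIdeal (nonZeroDivisors R) K) := by
    rw [mul_comm (spanSingleton (nonZeroDivisors R) lam)
      ((I : FractionalIdeal (nonZeroDivisors R) K)), mul_assoc,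
      spanSingleton_mul_spanSingleton, habm, mul_comm]
  have h1 : spanSingleton (nonZeroDivisors R) lam * (I : FractionalIdeal (nonZeroDivisors R) K)
      = spanSingleton (nonZeroDivisors R) ((algebraMap R K) a)
          * (I : FractionalIdeal (nonZeroDivisors R) K)
          * (spanSingleton (nonZeroDivisors R) ((algebraMap R K) b))⁻¹ := by
    rw [← hcalc, mul_assoc, mul_inv_cancel₀ hsb, mul_one]
  rw [h1]
  calc spanSingleton (nonZeroDivisors R) ((algebraMap R K) a)
        * (I : FractionalIdeal (nonZeroDivisors R) K)
        * (spanSingleton (nonZeroDivisors R) ((algebraMap R K) b))⁻¹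
      ≤ spanSingleton (nonZeroDivisors R) ((algebraMap R K) b)
        * (C : FractionalIdeal (nonZeroDivisors R) K)
        * (spanSingleton (nonZeroDivisors R) ((algebraMap R K) b))⁻¹ := mul_le_mul_left hle _
    _ = (C : FractionalIdeal (nonZeroDivisors R) K) := by
        rw [mul_comm (spanSingleton (nonZeroDivisors R) ((algebraMap R K) b))
          ((C : FractionalIdeal (nonZeroDivisors R) K)), mul_assoc, mul_inv_cancel₀ hsb, mul_one]

lemma one_add_ne_zero' {C I : Ideal R} (hC1 : C ≠ ⊤) (hI0 : I ≠ ⊥) (hcop : I ⊔ C = ⊤) {lam : K}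
    (hlam : lam ∈ ((C : FractionalIdeal (nonZeroDivisors R) K) *
      ((I : FractionalIdeal (nonZeroDivisors R) K))⁻¹)) :
    (1 : K) + lam ≠ 0 := by
  intro h
  have hm1 : lam = -1 := by linear_combination h
  have h1 : (1 : K) ∈ ((C : FractionalIdeal (nonZeroDivisors R) K) *
      ((I : FractionalIdeal (nonZeroDivisors R) K))⁻¹) := by
    rw [← FractionalIdeal.mem_coe] at hlam ⊢
    have := Submodule.neg_mem _ hlam
    rwa [hm1, neg_neg] at this
  have h2 := (memF_iff K hI0).mp h1
  rw [spanSingleton_one, one_mul] at h2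
  have h3 : I ≤ C := (coeIdeal_le_coeIdeal K).mp h2
  exact hC1 (by rw [← hcop, sup_eq_right.mpr h3])

lemma part1' {C I : Ideal R} (hC1 : C ≠ ⊤) (hI0 : I ≠ ⊥) (hcop : I ⊔ C = ⊤) {lam : K}
    (hlam : lam ∈ ((C : FractionalIdeal (nonZeroDivisors R) K) *
      ((I : FractionalIdeal (nonZeroDivisors R) K))⁻¹)) :
    ∃ J : Ideal R, J ≠ ⊥ ∧ J ⊔ C = ⊤ ∧
      (J : FractionalIdeal (nonZeroDivisors R) K)
        = spanSingleton (nonZeroDivisors R) (1 + lam)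
            * (I : FractionalIdeal (nonZeroDivisors R) K) := by
  set α : K := 1 + lam with hα
  have hα0 : α ≠ 0 := one_add_ne_zero' hC1 hI0 hcop hlam
  have hlamle := (memF_iff K hI0).mp hlam
  have hint : spanSingleton (nonZeroDivisors R) α
      * (I : FractionalIdeal (nonZeroDivisors R) K) ≤ 1 := by
    rw [mul_le]
    intro i hi j hj
    obtain ⟨r, hr⟩ := (mem_spanSingleton _).mp hi
    obtain ⟨y, hyI, hy⟩ := (mem_coeIdeal _).mp hj
    have hly : lam * algebraMap R K y ∈ (C : FractionalIdeal (nonZeroDivisors R) K) :=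
      hlamle (mul_mem_mul (mem_spanSingleton_self _ lam) ((mem_coeIdeal _).mpr ⟨y, hyI, rfl⟩))
    obtain ⟨c, _, hc⟩ := (mem_coeIdeal _).mp hly
    have hij : i * j = algebraMap R K (r * (y + c)) := by
      rw [← hr, ← hy, Algebra.smul_def, _root_.map_mul, _root_.map_add, hc, hα]
      ring
    rw [hij]
    exact (mem_one_iff _).mpr ⟨_, rfl⟩
  obtain ⟨J, hJ⟩ := le_one_iff_exists_coeIdeal.mp hint
  refine ⟨J, ?_, ?_, hJ⟩
  · intro h
    rw [h] at hJ
    have : spanSingleton (nonZeroDivisors R) α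
        * (I : FractionalIdeal (nonZeroDivisors R) K) = 0 := by
      rw [← hJ]; simp
    rcases mul_eq_zero.mp this with h' | h'
    · exact hα0 (spanSingleton_eq_zero_iff.mp h')
    · exact hI0 (by simpa using h')
  · have h1 : (1 : R) ∈ I ⊔ C := by rw [hcop]; trivial
    obtain ⟨x, hxI, c, hcC, hxc⟩ := Submodule.mem_sup.mp h1
    obtain ⟨c', hc'C, hc'⟩ := (mem_coeIdeal _).mp
      (hlamle (mul_mem_mul (mem_spanSingleton_self _ lam) ((mem_coeIdeal _).mpr ⟨x, hxI, rfl⟩)))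
    have hmem : α * algebraMap R K x ∈ (J : FractionalIdeal (nonZeroDivisors R) K) := by
      rw [hJ]
      exact mul_mem_mul (mem_spanSingleton_self _ α) ((mem_coeIdeal _).mpr ⟨x, hxI, rfl⟩)
    obtain ⟨j, hjJ, hj⟩ := (mem_coeIdeal _).mp hmem
    have hjeq : j = x + c' := by
      apply IsFractionRing.injective R K
      rw [hj, _root_.map_add, hc', hα]
      ring
    rw [Ideal.eq_top_iff_one]
    have hone : (1 : R) = j + (c - c') := by rw [hjeq, ← hxc]; ring
    rw [hone]
    exact Submodule.add_mem _ (Ideal.mem_sup_left hjJ)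
      (Ideal.mem_sup_right (Ideal.sub_mem _ hcC hc'C))

lemma part3f {C I : Ideal R} (hC0 : C ≠ ⊥) (hC1 : C ≠ ⊤) (hI0 : I ≠ ⊥) (hcop : I ⊔ C = ⊤)
    {lamα lamβ : K}
    (hlα : lamα ∈ ((C : FractionalIdeal (nonZeroDivisors R) K) *
      ((I : FractionalIdeal (nonZeroDivisors R) K))⁻¹))
    (hlβ : lamβ ∈ ((C : FractionalIdeal (nonZeroDivisors R) K) *
      ((I : FractionalIdeal (nonZeroDivisors R) K))⁻¹))
    (heq : spanSingleton (nonZeroDivisors R) (1 + lamα)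
        * (I : FractionalIdeal (nonZeroDivisors R) K)
      = spanSingleton (nonZeroDivisors R) (1 + lamβ)
        * (I : FractionalIdeal (nonZeroDivisors R) K)) :
    ∃ u : Rˣ, ((u : R) - 1) ∈ C ∧ (1 + lamβ) = algebraMap R K u * (1 + lamα) := by
  set α : K := 1 + lamα with hαd
  set β : K := 1 + lamβ with hβd
  have hα0 : α ≠ 0 := one_add_ne_zero' hC1 hI0 hcop hlα
  have hInz : (I : FractionalIdeal (nonZeroDivisors R) K) ≠ 0 := by simpa using hI0
  have hspan : spanSingleton (nonZeroDivisors R) α = spanSingleton (nonZeroDivisors R) β :=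
    mul_right_cancel₀ hInz heq
  obtain ⟨r, hr⟩ := (mem_spanSingleton _).mp (hspan ▸ mem_spanSingleton_self _ β)
  obtain ⟨s, hs⟩ := (mem_spanSingleton _).mp (hspan ▸ mem_spanSingleton_self _ α)
  have hsr : s * r = 1 := by
    have h1 : (s * r) • α = α := by
      rw [← smul_smul, hr, hs]
    rw [Algebra.smul_def] at h1
    have h2 : algebraMap R K (s * r) = 1 := by
      have := mul_right_cancel₀ hα0 (h1.trans (one_mul α).symm)
      exact this
    apply IsFractionRing.injective R K
    rw [h2, _root_.map_one]
  have hβr : β = algebraMap R K r * α := by rw [← hr, Algebra.smul_def]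
  refine ⟨⟨r, s, by rw [mul_comm]; exact hsr, hsr⟩, ?_, hβr⟩
  show r - 1 ∈ C
  by_cases hr1 : r = 1
  · rw [hr1, sub_self]; exact Submodule.zero_mem _
  have hsub0 : r - 1 ≠ 0 := sub_ne_zero.mpr hr1
  have hne : Ideal.span {r - 1} ≠ (⊥ : Ideal R) := by
    rwa [Ne, Ideal.span_singleton_eq_bot]
  have hcd : C ∣ Ideal.span {r - 1} := by
    apply dvd_of_cnt_le hC0 hne
    intro v
    by_cases hvC : v.asIdeal ∣ C
    · set n := cnt v C with hn
      have hn0 : n ≠ 0 := (Associates.count_ne_zero_iff_dvd hC0 v.irreducible).mpr hvC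
      -- val α = 1
      have hvlamα := val_of_memF hC0 hI0 hcop v hvC hlα
      have hvlamβ := val_of_memF hC0 hI0 hcop v hvC hlβ
      have hlt1 : ((Multiplicative.ofAdd (-(n : ℤ)) : Multiplicative ℤ) :
          WithZero (Multiplicative ℤ)) < 1 := by
        rw [← WithZero.coe_one, WithZero.coe_lt_coe, ← ofAdd_zero, Multiplicative.ofAdd_lt]
        omega
      have hvα : (v.valuation K) α = 1 :=
        Valuation.map_one_add_of_lt (v.valuation K) (lt_of_le_of_lt hvlamα hlt1)
      -- val (β - α) ≤ ofAdd (-n)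
      have hβα : β - α = lamβ - lamα := by rw [hαd, hβd]; ring
      have hvβα : (v.valuation K) (β - α) ≤
          ((Multiplicative.ofAdd (-(n : ℤ)) : Multiplicative ℤ) :
            WithZero (Multiplicative ℤ)) := by
        rw [hβα]
        have h1 : lamβ - 1 * lamα = lamβ - lamα := by ring
        exact Valuation.map_sub_le (v.valuation K) hvlamβ hvlamα
      -- algebraMap (r-1) * α = β - α
      have hkey : algebraMap R K (r - 1) * α = β - α := by
        rw [_root_.map_sub, _root_.map_one, hβr]; ring
      have hintval : v.intValuation (r - 1) ≤
          ((Multiplicative.ofAdd (-(n : ℤ)) : Multiplicative ℤ) :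
            WithZero (Multiplicative ℤ)) := by
        have := congrArg (v.valuation K) hkey
        rw [Valuation.map_mul, valuation_of_algebraMap, hvα, mul_one] at this
        rw [this]
        exact hvβα
      rw [intValuation_apply] at hintval
      exact cnt_le_of_pow_dvd v hne ((v.intValuation_le_pow_iff_dvd (r - 1) n).mp hintval)
    · rw [cnt_eq_zero_of_not_dvd v hC0 hvC]
      positivity
  exact Ideal.dvd_span_singleton.mp hcd

lemma part3b {α : K} (u : Rˣ) :
    spanSingleton (nonZeroDivisors R) (algebraMap R K u * α)
      = spanSingleton (nonZeroDivisors R) α := by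
  rw [← spanSingleton_mul_spanSingleton, ← coeIdeal_span_singleton,
    Ideal.span_singleton_eq_top.mpr u.isUnit, coeIdeal_top, one_mul]

end Helpers

/-- For `𝒪_K = R` a Dedekind domain (the integral closure of `A` in `K`),
`𝔠` a nonzero proper ideal and `I` an integral ideal coprime to `𝔠`, the map `α ↦ α·I`
induces a bijection from `(1 + 𝔠I⁻¹)/𝒪^{(1)}_{K,𝔠}` onto the set of nonzero integral
ideals `J` with `[J] = [I]` in the ray class group `Cl(𝒪_K, 𝔠)` (i.e. `J` coprime to `𝔠`
and `J = (β)·I` for some `β ≡ 1 (mod* 𝔠)`): it maps into this set, it is surjective onto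
it, and its fibers are exactly the orbits of `𝒪^{(1)}_{K,𝔠} = {u ∈ 𝒪^× : u ≡ 1 mod 𝔠}`. -/
theorem statement19 {R K : Type*} [CommRing R] [IsDedekindDomain R] [Field K]
    [Algebra R K] [IsFractionRing R K]
    (C I : Ideal R) (hC0 : C ≠ ⊥) (hC1 : C ≠ ⊤) (hI0 : I ≠ ⊥) (hcop : I ⊔ C = ⊤) :
    (∀ α : K,
      (∃ lam ∈ ((C : FractionalIdeal (nonZeroDivisors R) K) *
          ((I : FractionalIdeal (nonZeroDivisors R) K))⁻¹), α = 1 + lam) →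
      ∃ J : Ideal R, J ≠ ⊥ ∧ J ⊔ C = ⊤ ∧
        (J : FractionalIdeal (nonZeroDivisors R) K)
          = spanSingleton (nonZeroDivisors R) α * (I : FractionalIdeal (nonZeroDivisors R) K) ∧
        ∃ β : K, β ≠ 0 ∧
          (J : FractionalIdeal (nonZeroDivisors R) K)
            = spanSingleton (nonZeroDivisors R) β * (I : FractionalIdeal (nonZeroDivisors R) K) ∧
          RayCong K C β) ∧
    (∀ J : Ideal R, J ≠ ⊥ → J ⊔ C = ⊤ →
      (∃ β : K, β ≠ 0 ∧
        (J : FractionalIdeal (nonZeroDivisors R) K)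
          = spanSingleton (nonZeroDivisors R) β * (I : FractionalIdeal (nonZeroDivisors R) K) ∧
        RayCong K C β) →
      ∃ α : K,
        (∃ lam ∈ ((C : FractionalIdeal (nonZeroDivisors R) K) *
            ((I : FractionalIdeal (nonZeroDivisors R) K))⁻¹), α = 1 + lam) ∧
        (J : FractionalIdeal (nonZeroDivisors R) K)
          = spanSingleton (nonZeroDivisors R) α * (I : FractionalIdeal (nonZeroDivisors R) K)) ∧
    (∀ α β : K,
      (∃ lam ∈ ((C : FractionalIdeal (nonZeroDivisors R) K) *
          ((I : FractionalIdeal (nonZeroDivisors R) K))⁻¹), α = 1 + lam) →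
      (∃ lam ∈ ((C : FractionalIdeal (nonZeroDivisors R) K) *
          ((I : FractionalIdeal (nonZeroDivisors R) K))⁻¹), β = 1 + lam) →
      (spanSingleton (nonZeroDivisors R) α * (I : FractionalIdeal (nonZeroDivisors R) K)
          = spanSingleton (nonZeroDivisors R) β * (I : FractionalIdeal (nonZeroDivisors R) K)
        ↔ ∃ u : Rˣ, ((u : R) - 1) ∈ C ∧ β = algebraMap R K u * α)) := by
  refine ⟨?_, ?_, ?_⟩
  · rintro α ⟨lam, hlam, rfl⟩
    obtain ⟨J, hJ0, hJcop, hJeq⟩ := part1' hC1 hI0 hcop hlam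
    refine ⟨J, hJ0, hJcop, hJeq, 1 + lam, one_add_ne_zero' hC1 hI0 hcop hlam, hJeq, ?_⟩
    intro v hv
    have h : (1 : K) + lam - 1 = lam := by ring
    rw [h]
    exact val_of_memF hC0 hI0 hcop v hv hlam
  · rintro J hJ0 hJc ⟨β, hβ0, hJeq, hray⟩
    exact ⟨β, ⟨β - 1, mem_of_val hC0 hI0 hcop hJeq hray, by ring⟩, hJeq⟩
  · rintro α β ⟨la, hla, rfl⟩ ⟨lb, hlb, rfl⟩
    constructor
    · intro h
      exact part3f hC0 hC1 hI0 hcop hla hlb h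
    · rintro ⟨u, _, hu⟩
      rw [hu, part3b]
end
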